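/- Let δ ∈ (0,1] be a real number, let ℓ, k', d be positive integers with 0.01·δ·d·ℓ ≥ 2, and let S_1,…,S_{k'} be finite subsets of a set V such that for every nonempty M ⊆ {1,…,k'} one has |∪_{j∈M} S_j| ≥ 0.01·δ·|M|·ℓ. Let F be a simple graph on vertex set {1,…,k'} with minimum degree at least d, and let E^(F) be the set of unordered pairs {u,v} of distinct elements of V such that u ∈ S_j and v ∈ S_{j'} for some edge {j,j'} of F. Then |E^(F)| ≥ 10^{−5} · δ² · k' · d · ℓ². -/

import Mathlib

private lemma stmt5_floor_half {x : ℝ} (hx : 1 ≤ x) : x / 2 ≤ (⌊x⌋₊ : ℝ) := by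
  rcases le_or_gt 2 x with h | h
  · have := Nat.sub_one_lt_floor x
    linarith
  · have h1 : (1 : ℕ) ≤ ⌊x⌋₊ := Nat.le_floor (by exact_mod_cast hx)
    have : (1 : ℝ) ≤ (⌊x⌋₊ : ℝ) := by exact_mod_cast h1
    linarith

private lemma stmt5_card_le_two {α : Type*} {s : Finset α}
    (h : ∀ a ∈ s, ∀ b ∈ s, ∀ c ∈ s, a = b ∨ a = c ∨ b = c) : s.card ≤ 2 := by
  by_contra hlt
  push_neg at hlt
  obtain ⟨a, ha, b, hb, c, hc, hab, hac, hbc⟩ := Finset.two_lt_card.mp hlt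
  rcases h a ha b hb c hc with h' | h' | h'
  · exact hab h'
  · exact hac h'
  · exact hbc h'

set_option maxHeartbeats 1600000 in
/-- If the union of the `S j` over any nonempty index set `M` has size at least
`0.01·δ·|M|·ℓ`, and `F` is a graph on `Fin k'` with minimum degree at least `d`
(with `0.01·δ·d·ℓ ≥ 2`), then the set `E^(F)` of unordered pairs `{u,v}` of distinct
elements with `u ∈ S j`, `v ∈ S j'` for some edge `{j, j'}` of `F` has size at least
`10⁻⁵·δ²·k'·d·ℓ²`. -/
theorem stmt_5 {V : Type} [DecidableEq V] (δ : ℝ) (hδ : δ ∈ Set.Ioc (0 : ℝ) 1)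
    (ℓ k' d : ℕ) (hℓ : 0 < ℓ) (hk' : 0 < k') (hd : 0 < d)
    (hdl : (2 : ℝ) ≤ 0.01 * δ * d * ℓ)
    (S : Fin k' → Finset V)
    (hS : ∀ M : Finset (Fin k'), M.Nonempty →
      0.01 * δ * M.card * ℓ ≤ ((M.biUnion S).card : ℝ))
    (F : SimpleGraph (Fin k'))
    (hF : ∀ v : Fin k', d ≤ Nat.card (F.neighborSet v)) :
    (10 : ℝ) ^ (-5 : ℤ) * δ ^ 2 * k' * d * ℓ ^ 2 ≤
      (Nat.card {e : Sym2 V | ∃ u v : V, e = s(u, v) ∧ u ≠ v ∧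
        ∃ j j' : Fin k', F.Adj j j' ∧ u ∈ S j ∧ v ∈ S j'} : ℝ) := by
  classical
  obtain ⟨hδ0, hδ1⟩ := hδ
  have hℓ0 : (0 : ℝ) < ℓ := by exact_mod_cast hℓ
  have hd0 : (0 : ℝ) < d := by exact_mod_cast hd
  have hk0 : (0 : ℝ) < k' := by exact_mod_cast hk'
  set c : ℝ := 0.01 * δ * ℓ with hc
  have hc0 : 0 < c := by rw [hc]; positivity
  have hcd : (2 : ℝ) ≤ c * d := by
    have : c * d = 0.01 * δ * d * ℓ := by rw [hc]; ring
    linarith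
  -- minimum degree in Finset form
  have hd' : ∀ v : Fin k', d ≤ (F.neighborFinset v).card := by
    intro v
    have h1 := hF v
    rwa [Nat.card_eq_fintype_card, SimpleGraph.card_neighborSet_eq_degree] at h1
  have hdk : (d : ℝ) ≤ k' := by
    have h1 : d ≤ (F.neighborFinset ⟨0, hk'⟩).card := hd' _
    have h2 : (F.neighborFinset ⟨0, hk'⟩).card ≤ k' := by
      simpa using Finset.card_le_univ (F.neighborFinset ⟨0, hk'⟩)
    exact_mod_cast h1.trans h2
  -- the target set as a Finset
  set W : Finset V := Finset.univ.biUnion S with hW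
  set Efin : Finset (Sym2 V) :=
    ((W ×ˢ W).filter (fun p => p.1 ≠ p.2 ∧
      ∃ j j' : Fin k', F.Adj j j' ∧ p.1 ∈ S j ∧ p.2 ∈ S j')).image
      (fun p => s(p.1, p.2)) with hEfin
  have hset : {e : Sym2 V | ∃ u v : V, e = s(u, v) ∧ u ≠ v ∧
      ∃ j j' : Fin k', F.Adj j j' ∧ u ∈ S j ∧ v ∈ S j'} = ↑Efin := by
    ext e
    simp only [Set.mem_setOf_eq, hEfin, Finset.coe_image, Set.mem_image, Finset.mem_coe,
      Finset.mem_filter, Finset.mem_product]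
    constructor
    · rintro ⟨u, v, he, hne, j, j', hadj, hu, hv⟩
      refine ⟨(u, v), ⟨⟨?_, ?_⟩, hne, j, j', hadj, hu, hv⟩, he.symm⟩
      · exact Finset.mem_biUnion.mpr ⟨j, Finset.mem_univ _, hu⟩
      · exact Finset.mem_biUnion.mpr ⟨j', Finset.mem_univ _, hv⟩
    · rintro ⟨⟨u, v⟩, ⟨⟨-, -⟩, hne, j, j', hadj, hu, hv⟩, he⟩
      exact ⟨u, v, he.symm, hne, j, j', hadj, hu, hv⟩
  have hcard : (Nat.card {e : Sym2 V | ∃ u v : V, e = s(u, v) ∧ u ≠ v ∧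
      ∃ j j' : Fin k', F.Adj j j' ∧ u ∈ S j ∧ v ∈ S j'} : ℝ) = (Efin.card : ℝ) := by
    rw [hset, Nat.card_coe_set_eq, Set.ncard_coe_finset]
  rw [hcard]
  -- membership helper
  have hmem : ∀ (u v : V) (j j' : Fin k'), F.Adj j j' → u ∈ S j → v ∈ S j' → u ≠ v →
      s(u, v) ∈ Efin := by
    intro u v j j' hadj hu hv hne
    rw [hEfin]
    refine Finset.mem_image.mpr ⟨(u, v), Finset.mem_filter.mpr ⟨?_, hne, j, j', hadj, hu, hv⟩, rfl⟩
    exact Finset.mem_product.mpr ⟨Finset.mem_biUnion.mpr ⟨j, Finset.mem_univ _, hu⟩,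
      Finset.mem_biUnion.mpr ⟨j', Finset.mem_univ _, hv⟩⟩
  -- union over neighborhoods is large
  have hUj : ∀ j : Fin k', c * d ≤ (((F.neighborFinset j).biUnion S).card : ℝ) := by
    intro j
    have hne : (F.neighborFinset j).Nonempty :=
      Finset.card_pos.mp (lt_of_lt_of_le hd (hd' j))
    have hdc : (d : ℝ) ≤ ((F.neighborFinset j).card : ℝ) := by exact_mod_cast hd' j
    calc c * d = 0.01 * δ * ℓ * d := by rw [hc]
      _ ≤ 0.01 * δ * ℓ * (F.neighborFinset j).card := by
          apply mul_le_mul_of_nonneg_left hdc; positivity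
      _ = 0.01 * δ * (F.neighborFinset j).card * ℓ := by ring
      _ ≤ _ := hS _ hne
  -- main bound
  suffices hmain : c ^ 2 * k' * d / 8 ≤ (Efin.card : ℝ) by
    refine le_trans ?_ hmain
    have key : c ^ 2 * k' * d / 8 =
        (10 : ℝ) ^ (-5 : ℤ) * δ ^ 2 * k' * d * ℓ ^ 2 + 0.0000025 * (δ ^ 2 * k' * d * ℓ ^ 2) := by
      rw [hc]; norm_num; ring
    have hpos : (0 : ℝ) ≤ δ ^ 2 * k' * d * ℓ ^ 2 := by positivity
    linarith
  rcases le_or_gt 1 c with hc1 | hc1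
  · -- CASE A : c ≥ 1
    set t : ℕ := ⌊c⌋₊ with htdef
    have htc : c / 2 ≤ (t : ℝ) := stmt5_floor_half hc1
    have htc' : (t : ℝ) ≤ c := Nat.floor_le hc0.le
    have hall : ∀ A : Finset (Fin k' × Fin t), A.card ≤ (A.biUnion (fun p => S p.1)).card := by
      intro A
      rcases A.eq_empty_or_nonempty with rfl | hA
      · simp
      set M := A.image Prod.fst with hM
      have hMne : M.Nonempty := hA.image _
      have hAcard : A.card ≤ M.card * t := by
        calc A.card ≤ (M ×ˢ (Finset.univ : Finset (Fin t))).card := by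
              apply Finset.card_le_card
              intro p hp
              exact Finset.mem_product.mpr ⟨Finset.mem_image_of_mem _ hp, Finset.mem_univ _⟩
          _ = M.card * t := by simp [Finset.card_product]
      have hUn : A.biUnion (fun p => S p.1) = M.biUnion S := by
        ext v
        simp only [Finset.mem_biUnion, hM, Finset.mem_image]
        constructor
        · rintro ⟨p, hp, hv⟩; exact ⟨p.1, ⟨p, hp, rfl⟩, hv⟩
        · rintro ⟨j, ⟨p, hp, rfl⟩, hv⟩; exact ⟨p, hp, hv⟩
      rw [hUn]
      have hreal : ((M.card * t : ℕ) : ℝ) ≤ ((M.biUnion S).card : ℝ) := by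
        push_cast
        calc (M.card : ℝ) * t ≤ M.card * c := by
              apply mul_le_mul_of_nonneg_left htc' (by positivity)
          _ = 0.01 * δ * M.card * ℓ := by rw [hc]; ring
          _ ≤ _ := hS M hMne
      exact hAcard.trans (by exact_mod_cast hreal)
    obtain ⟨f, hfinj, hfmem⟩ :=
      (Finset.all_card_le_biUnion_card_iff_exists_injective (fun p : Fin k' × Fin t => S p.1)).mp
        hall
    -- the set of adjacent ordered pairs
    set A2 : Finset (Fin k' × Fin k') :=
      Finset.univ.biUnion (fun α => ({α} : Finset (Fin k')) ×ˢ F.neighborFinset α) with hA2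
    have hA2mem : ∀ p : Fin k' × Fin k', p ∈ A2 ↔ F.Adj p.1 p.2 := by
      intro p
      simp only [hA2, Finset.mem_biUnion, Finset.mem_univ, true_and, Finset.mem_product,
        Finset.mem_singleton, SimpleGraph.mem_neighborFinset]
      constructor
      · rintro ⟨α, rfl, h⟩; exact h
      · intro h; exact ⟨p.1, rfl, h⟩
    have hA2card : k' * d ≤ A2.card := by
      rw [hA2, Finset.card_biUnion]
      · calc k' * d = ∑ _α : Fin k', d := by simp [mul_comm]
          _ ≤ ∑ α : Fin k', (({α} : Finset (Fin k')) ×ˢ F.neighborFinset α).card := by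
              apply Finset.sum_le_sum
              intro α _
              simp only [Finset.card_product, Finset.card_singleton, one_mul]
              exact hd' α
      · intro α _ β _ hne
        simp only [Finset.disjoint_left, Finset.mem_product, Finset.mem_singleton]
        rintro p ⟨rfl, -⟩ ⟨h, -⟩
        exact hne h
    set D : Finset ((Fin k' × Fin k') × (Fin t × Fin t)) :=
      A2 ×ˢ (Finset.univ : Finset (Fin t × Fin t)) with hD
    set g : (Fin k' × Fin k') × (Fin t × Fin t) → Sym2 V :=
      fun q => s(f (q.1.1, q.2.1), f (q.1.2, q.2.2)) with hg
    have himg : D.image g ⊆ Efin := by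
      intro e he
      obtain ⟨q, hq, rfl⟩ := Finset.mem_image.mp he
      have hadj : F.Adj q.1.1 q.1.2 := (hA2mem q.1).mp (Finset.mem_product.mp hq).1
      have hne : f (q.1.1, q.2.1) ≠ f (q.1.2, q.2.2) := by
        intro h
        have := hfinj h
        exact hadj.ne (congrArg Prod.fst this)
      exact hmem _ _ q.1.1 q.1.2 hadj (hfmem _) (hfmem _) hne
    have hkey : ∀ q q' : (Fin k' × Fin k') × (Fin t × Fin t), g q = g q' →
        q' = q ∨ q' = ((q.1.2, q.1.1), (q.2.2, q.2.1)) := by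
      rintro ⟨⟨a, b⟩, ⟨i, j⟩⟩ ⟨⟨a', b'⟩, ⟨i', j'⟩⟩ hgq
      simp only [hg, Sym2.eq_iff] at hgq
      rcases hgq with ⟨h1, h2⟩ | ⟨h1, h2⟩
      · have e1 := hfinj h1
        have e2 := hfinj h2
        left
        simp only [Prod.mk.injEq] at e1 e2 ⊢
        exact ⟨⟨e1.1.symm, e2.1.symm⟩, e1.2.symm, e2.2.symm⟩
      · have e1 := hfinj h1
        have e2 := hfinj h2
        right
        simp only [Prod.mk.injEq] at e1 e2 ⊢
        exact ⟨⟨e2.1.symm, e1.1.symm⟩, e2.2.symm, e1.2.symm⟩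
    have hfiber : ∀ e ∈ D.image g, (D.filter (fun q => g q = e)).card ≤ 2 := by
      intro e _
      apply stmt5_card_le_two
      intro a ha b hb c' hc'
      simp only [Finset.mem_filter] at ha hb hc'
      have hb' := hkey a b (ha.2.trans hb.2.symm)
      have hc'' := hkey a c' (ha.2.trans hc'.2.symm)
      rcases hb' with rfl | rfl
      · exact Or.inl rfl
      · rcases hc'' with rfl | rfl
        · exact Or.inr (Or.inl rfl)
        · exact Or.inr (Or.inr rfl)
    have hDle : D.card ≤ 2 * (D.image g).card :=
      Finset.card_le_mul_card_image D 2 (by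
        intro b hb; exact hfiber b hb)
    have hDcard : k' * d * (t * t) ≤ D.card := by
      rw [hD, Finset.card_product]
      have : (Finset.univ : Finset (Fin t × Fin t)).card = t * t := by simp
      rw [this]
      exact Nat.mul_le_mul_right _ hA2card
    have hchain : k' * d * (t * t) ≤ 2 * Efin.card :=
      hDcard.trans (hDle.trans (Nat.mul_le_mul_left _ (Finset.card_le_card himg)))
    have hchainR : (k' : ℝ) * d * (t * t) ≤ 2 * (Efin.card : ℝ) := by exact_mod_cast hchain
    have ht2 : c ^ 2 / 4 ≤ (t : ℝ) * t := by
      have h := mul_le_mul htc htc (by positivity) (by positivity)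
      calc c ^ 2 / 4 = (c/2) * (c/2) := by ring
        _ ≤ (t : ℝ) * t := h
    have hstep : (k' : ℝ) * d * (c ^ 2 / 4) ≤ 2 * (Efin.card : ℝ) :=
      (mul_le_mul_of_nonneg_left ht2 (by positivity)).trans hchainR
    linarith
  · -- CASE B : c < 1
    set m : ℕ := ⌊c * k'⌋₊ with hm
    have hck2 : (2 : ℝ) ≤ c * k' := by nlinarith
    have hm2 : c * k' / 2 ≤ (m : ℝ) := stmt5_floor_half (by linarith)
    have hmck : (m : ℝ) ≤ c * k' := Nat.floor_le (by positivity)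
    have hmk : m ≤ k' := by
      have : (m : ℝ) < k' := by nlinarith
      exact_mod_cast this.le
    -- a default element of V
    have hSne : (S ⟨0, hk'⟩).Nonempty := by
      rw [← Finset.card_pos]
      have h1 := hS {⟨0, hk'⟩} (Finset.singleton_nonempty _)
      rw [Finset.singleton_biUnion] at h1
      have : (0 : ℝ) < (S ⟨0, hk'⟩).card := by
        refine lt_of_lt_of_le ?_ h1
        simp only [Finset.card_singleton, Nat.cast_one]
        positivity
      exact_mod_cast this
    obtain ⟨v₀, -⟩ := hSne
    -- defect Hall with dummies
    set emb1 : V ↪ V ⊕ Fin (k' - m) := ⟨Sum.inl, Sum.inl_injective⟩ with hemb1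
    set emb2 : Fin (k' - m) ↪ V ⊕ Fin (k' - m) := ⟨Sum.inr, Sum.inr_injective⟩ with hemb2
    set S' : Fin k' → Finset (V ⊕ Fin (k' - m)) :=
      fun j => (S j).map emb1 ∪ (Finset.univ : Finset (Fin (k' - m))).map emb2 with hS'
    have hall : ∀ A : Finset (Fin k'), A.card ≤ (A.biUnion S').card := by
      intro A
      rcases A.eq_empty_or_nonempty with rfl | hA
      · simp
      have hun : A.biUnion S' =
          ((A.biUnion S).map emb1) ∪ ((Finset.univ : Finset (Fin (k' - m))).map emb2) := by
        ext a
        simp only [Finset.mem_biUnion, hS', Finset.mem_union, Finset.mem_map, hemb1, hemb2,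
          Function.Embedding.coeFn_mk, Finset.mem_univ, true_and]
        obtain ⟨j₁, hj₁⟩ := hA
        constructor
        · rintro ⟨j, hj, ⟨v, hv, rfl⟩ | ⟨i, rfl⟩⟩
          · exact Or.inl ⟨v, ⟨j, hj, hv⟩, rfl⟩
          · exact Or.inr ⟨i, rfl⟩
        · rintro (⟨v, ⟨j, hj, hv⟩, rfl⟩ | ⟨i, rfl⟩)
          · exact ⟨j, hj, Or.inl ⟨v, hv, rfl⟩⟩
          · exact ⟨j₁, hj₁, Or.inr ⟨i, rfl⟩⟩
      rw [hun, Finset.card_union_of_disjoint, Finset.card_map, Finset.card_map]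
      · have hAk : (A.card : ℝ) ≤ k' := by
          exact_mod_cast (Finset.card_le_univ A).trans_eq (by simp)
        have hSU := hS A hA
        have hSU' : c * A.card ≤ ((A.biUnion S).card : ℝ) := by
          refine le_trans (le_of_eq ?_) hSU; rw [hc]; ring
        have hcast : ((k' - m : ℕ) : ℝ) = (k' : ℝ) - m := by
          rw [Nat.cast_sub hmk]
        have hgoal : (A.card : ℝ) ≤ ((A.biUnion S).card : ℝ) + ((k' - m : ℕ) : ℝ) := by
          rw [hcast]
          nlinarith [mul_le_mul_of_nonneg_left hAk (show (0:ℝ) ≤ 1 - c by linarith)]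
        have : A.card ≤ (A.biUnion S).card + (k' - m) := by exact_mod_cast hgoal
        simpa using this
      · simp only [Finset.disjoint_left, Finset.mem_map, hemb1, hemb2,
          Function.Embedding.coeFn_mk]
        rintro a ⟨v, -, rfl⟩ ⟨i, -, h⟩
        exact Sum.inr_ne_inl h
    obtain ⟨f, hfinj, hfS'⟩ :=
      (Finset.all_card_le_biUnion_card_iff_exists_injective S').mp hall
    set Mstar : Finset (Fin k') := Finset.univ.filter (fun j => (f j).isLeft) with hMstar
    set x : Fin k' → V := fun j => Sum.elim id (fun _ => v₀) (f j) with hx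
    have hfx : ∀ j ∈ Mstar, f j = Sum.inl (x j) := by
      intro j hj
      simp only [hMstar, Finset.mem_filter, Finset.mem_univ, true_and] at hj
      rcases hfj : f j with v | i
      · simp [hx, hfj]
      · rw [hfj] at hj; simp at hj
    have hxS : ∀ j ∈ Mstar, x j ∈ S j := by
      intro j hj
      have h1 := hfS' j
      rw [hfx j hj] at h1
      simp only [hS', Finset.mem_union, Finset.mem_map, hemb1, hemb2,
        Function.Embedding.coeFn_mk, Finset.mem_univ, true_and] at h1
      rcases h1 with ⟨v, hv, hv'⟩ | ⟨i, hi⟩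
      · rw [Sum.inl.injEq] at hv'; rwa [← hv']
      · exact absurd hi (by simp)
    have hxinj : ∀ j ∈ Mstar, ∀ j' ∈ Mstar, x j = x j' → j = j' := by
      intro j hj j' hj' h
      apply hfinj
      rw [hfx j hj, hfx j' hj', h]
    have hMcard : m ≤ Mstar.card := by
      have hco := Finset.card_filter_add_card_filter_not
        (s := (Finset.univ : Finset (Fin k'))) (p := fun j => (f j).isLeft)
      have hright : (Finset.univ.filter (fun j => ¬ (f j).isLeft)).card ≤ k' - m := by
        have h1 : (Finset.univ.filter (fun j => ¬ (f j).isLeft)).card ≤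
            ((Finset.univ : Finset (Fin (k' - m))).image Option.some).card := by
          apply Finset.card_le_card_of_injOn (fun j => (f j).getRight?)
          · intro j hj
            simp only [Finset.mem_coe, Finset.mem_filter, Finset.mem_univ, true_and] at hj
            rcases hfj : f j with v | i
            · rw [hfj] at hj; simp at hj
            · simp only [hfj, Sum.getRight?]
              exact Finset.mem_image_of_mem _ (Finset.mem_univ i)
          · intro a ha b hb hab
            simp only [Finset.coe_filter, Set.mem_setOf_eq] at ha hb
            rcases hfa : f a with v | i
            · rw [hfa] at ha; simp at ha
            · rcases hfb : f b with w | i'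
              · rw [hfb] at hb; simp at hb
              · apply hfinj
                rw [hfa, hfb]
                simp only [hfa, hfb, Sum.getRight?, Option.some.injEq] at hab
                rw [hab]
        have h2 : ((Finset.univ : Finset (Fin (k' - m))).image Option.some).card = k' - m := by
          rw [Finset.card_image_of_injective _ (Option.some_injective _)]
          simp
        omega
      have hMc : Mstar.card = (Finset.univ.filter (fun j => (f j).isLeft)).card := by
        rw [hMstar]
      have hcu : (Finset.univ : Finset (Fin k')).card = k' := by simp
      omega
    -- counting
    set U : Fin k' → Finset V := fun j => (F.neighborFinset j).biUnion S with hU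
    have hUx : ∀ j : Fin k', c * d / 2 ≤ ((U j \ {x j}).card : ℝ) := by
      intro j
      have h1 : (U j).card ≤ (U j \ {x j}).card + 1 := by
        have hsub : U j ⊆ insert (x j) (U j \ {x j}) := by
          intro a ha
          rcases eq_or_ne a (x j) with rfl | hne
          · exact Finset.mem_insert_self _ _
          · exact Finset.mem_insert_of_mem (Finset.mem_sdiff.mpr ⟨ha, by simpa using hne⟩)
        exact (Finset.card_le_card hsub).trans (Finset.card_insert_le _ _)
      have h2 : c * d ≤ ((U j).card : ℝ) := hUj j
      have h3 : ((U j).card : ℝ) ≤ ((U j \ {x j}).card : ℝ) + 1 := by exact_mod_cast h1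
      linarith
    set D : Finset (Fin k' × V) :=
      Mstar.biUnion (fun j => ({j} : Finset (Fin k')) ×ˢ (U j \ {x j})) with hD
    have hDmem : ∀ q ∈ D, q.1 ∈ Mstar ∧ q.2 ∈ U q.1 ∧ q.2 ≠ x q.1 := by
      intro q hq
      simp only [hD, Finset.mem_biUnion, Finset.mem_product, Finset.mem_singleton,
        Finset.mem_sdiff] at hq
      obtain ⟨j, hj, h1, h2, h3⟩ := hq
      subst h1
      exact ⟨hj, h2, by simpa using h3⟩
    have hDcard : (Mstar.card : ℝ) * (c * d / 2) ≤ (D.card : ℝ) := by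
      rw [hD, Finset.card_biUnion]
      · push_cast
        have := Finset.card_nsmul_le_sum Mstar
          (fun j => ((({j} : Finset (Fin k')) ×ˢ (U j \ {x j})).card : ℝ)) (c * d / 2)
          (fun j _ => by
            simp only [Finset.card_product, Finset.card_singleton, one_mul]
            exact hUx j)
        rw [nsmul_eq_mul] at this
        exact this
      · intro α _ β _ hne
        simp only [Finset.disjoint_left, Finset.mem_product, Finset.mem_singleton]
        rintro p ⟨rfl, -⟩ ⟨h, -⟩
        exact hne h
    set g : Fin k' × V → Sym2 V := fun q => s(x q.1, q.2) with hg
    have himg : D.image g ⊆ Efin := by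
      intro e he
      obtain ⟨q, hq, rfl⟩ := Finset.mem_image.mp he
      obtain ⟨hq1, hq2, hq3⟩ := hDmem q hq
      rw [hU] at hq2
      obtain ⟨j', hj', hv⟩ := Finset.mem_biUnion.mp hq2
      exact hmem _ _ q.1 j' ((F.mem_neighborFinset _ _).mp hj') (hxS _ hq1) hv
        (fun h => hq3 h.symm)
    have hkey : ∀ q ∈ D, ∀ q' ∈ D, g q = g q' →
        q' = q ∨ (x q'.1 = q.2 ∧ q'.2 = x q.1) := by
      intro q hq q' hq' hgq
      obtain ⟨hq1, -, -⟩ := hDmem q hq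
      obtain ⟨hq'1, -, -⟩ := hDmem q' hq'
      simp only [hg, Sym2.eq_iff] at hgq
      rcases hgq with ⟨h1, h2⟩ | ⟨h1, h2⟩
      · left
        have := hxinj _ hq1 _ hq'1 h1
        exact Prod.ext this.symm h2.symm
      · right
        exact ⟨h2.symm, h1.symm⟩
    have hfiber : ∀ e ∈ D.image g, (D.filter (fun q => g q = e)).card ≤ 2 := by
      intro e _
      apply stmt5_card_le_two
      intro a ha b hb c' hc'
      simp only [Finset.mem_filter] at ha hb hc'
      have hab := hkey a ha.1 b hb.1 (ha.2.trans hb.2.symm)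
      have hac := hkey a ha.1 c' hc'.1 (ha.2.trans hc'.2.symm)
      rcases hab with rfl | ⟨hb1, hb2⟩
      · exact Or.inl rfl
      · rcases hac with rfl | ⟨hc1, hc2⟩
        · exact Or.inr (Or.inl rfl)
        · refine Or.inr (Or.inr ?_)
          have hbM := (hDmem b hb.1).1
          have hcM := (hDmem c' hc'.1).1
          have h1 : b.1 = c'.1 := hxinj _ hbM _ hcM (hb1.trans hc1.symm)
          exact Prod.ext h1 (hb2.trans hc2.symm)
    have hDle : D.card ≤ 2 * (D.image g).card :=
      Finset.card_le_mul_card_image D 2 (by intro b hb; exact hfiber b hb)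
    have hchain : (D.card : ℝ) ≤ 2 * (Efin.card : ℝ) := by
      have := hDle.trans (Nat.mul_le_mul_left _ (Finset.card_le_card himg))
      exact_mod_cast this
    have hMR : (m : ℝ) ≤ (Mstar.card : ℝ) := by exact_mod_cast hMcard
    have hcd2 : (0 : ℝ) ≤ c * d / 2 := by positivity
    nlinarith [mul_le_mul_of_nonneg_right (hm2.trans hMR) hcd2]
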